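/- Let c̃ > 0, r > 0, x₀ ∈ ℝ, vL, vR ∈ ℝ, K₀ ∈ ℝ, and let ℓ : ℝ → ℝ be continuous. Define the step function w : ℝ → ℝ by w(x) = vL for x < x₀ and w(x) = vR for x ≥ x₀. Then: (i) (1/2π)·∫₀^{2π} [−(K₀/c̃)·sgn(cos θ) + w(x₀ + r·cos θ)·sin θ·cos θ] dθ = 0; and (ii) (1/2π)·∫₀^{2π} [−(1/c̃)·ℓ(x₀ + r·cos θ)·sgn(sin θ) + w(x₀ + r·cos θ)·(sin²θ + ½)] dθ = (vL + vR)/2. Hence the approximate evolution operator for piecewise constant data predicts normal velocity û(P) = 0 and tangential velocity v̂(P) = (vL + vR)/2 at an interface point for jet data, which are the well-balancing conditions required by the finite volume step. -/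

import Mathlib

open Real MeasureTheory intervalIntegral

lemma measurable_rsign : Measurable Real.sign := by
  have : Real.sign = fun r : ℝ => if r < 0 then (-1:ℝ) else if 0 < r then 1 else 0 := by
    funext r; rw [Real.sign]
  rw [this]
  exact Measurable.ite (measurableSet_lt measurable_id measurable_const) measurable_const
    (Measurable.ite (measurableSet_lt measurable_const measurable_id) measurable_const
      measurable_const)

lemma abs_rsign_le (y : ℝ) : |Real.sign y| ≤ 1 := by
  rcases Real.sign_apply_eq y with h | h | h <;> rw [h] <;> norm_num

lemma II_of_bound {f : ℝ → ℝ} (hf : Measurable f) (C : ℝ) (h : ∀ x, |f x| ≤ C) (a b : ℝ) :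
    IntervalIntegrable f volume a b := by
  rw [intervalIntegrable_iff, Set.uIoc]
  exact Measure.integrableOn_of_bounded (M := C) measure_Ioc_lt_top.ne
    hf.aestronglyMeasurable (Filter.Eventually.of_forall fun x => by simpa using h x)

/-- reflection θ ↦ 2π − θ kills reflection-odd integrands -/
lemma reflect_zero (F : ℝ → ℝ) (hF : ∀ θ, F (2 * π - θ) = -F θ) :
    ∫ θ in (0:ℝ)..(2 * π), F θ = 0 := by
  have h := intervalIntegral.integral_comp_sub_left (a := (0:ℝ)) (b := 2 * π) F (2 * π)
  have h2 : (∫ θ in (0:ℝ)..(2 * π), F (2 * π - θ)) = ∫ θ in (0:ℝ)..(2 * π), -F θ :=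
    intervalIntegral.integral_congr fun x _ => hF x
  rw [h2, intervalIntegral.integral_neg] at h
  simp only [sub_zero, sub_self] at h
  linarith

lemma int_sign_cos : ∫ θ in (0:ℝ)..(2 * π), Real.sign (Real.cos θ) = 0 := by
  have hint : ∀ a b : ℝ, IntervalIntegrable (fun θ => Real.sign (Real.cos θ)) volume a b :=
    II_of_bound (measurable_rsign.comp Real.measurable_cos) 1 (fun x => abs_rsign_le _)
  have hsplit := intervalIntegral.integral_add_adjacent_intervals (hint 0 π) (hint π (2 * π))
  have h := intervalIntegral.integral_comp_add_right (a := (0:ℝ)) (b := π)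
    (fun θ => Real.sign (Real.cos θ)) π
  have h2 : (∫ θ in (0:ℝ)..π, Real.sign (Real.cos (θ + π)))
      = ∫ θ in (0:ℝ)..π, -Real.sign (Real.cos θ) :=
    intervalIntegral.integral_congr fun x _ => by rw [Real.cos_add_pi, Real.sign_neg]
  rw [h2, intervalIntegral.integral_neg, zero_add] at h
  have : π + π = 2 * π := by ring
  rw [this] at h
  linarith

/-- Well-balancedness of the approximate evolution operator for piecewise
constant data at a jet interface: the predicted normal velocity vanishes and
the predicted tangential velocity is the arithmetic mean `(vL + vR)/2`. -/
theorem eg_predictor_well_balanced_jet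
    (cT r x₀ vL vR K₀ : ℝ) (hc : 0 < cT) (hr : 0 < r)
    (ℓ : ℝ → ℝ) (hℓ : Continuous ℓ)
    (w : ℝ → ℝ)
    (hw : ∀ x : ℝ, w x = if x < x₀ then vL else vR) :
    -- (i) predicted normal velocity û(P) = 0
    (1 / (2 * π)) * (∫ θ in (0 : ℝ)..(2 * π),
        (-(K₀ / cT) * Real.sign (Real.cos θ)
          + w (x₀ + r * Real.cos θ) * Real.sin θ * Real.cos θ)) = 0 ∧
    -- (ii) predicted tangential velocity v̂(P) = (vL + vR)/2
    (1 / (2 * π)) * (∫ θ in (0 : ℝ)..(2 * π),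
        (-(1 / cT) * ℓ (x₀ + r * Real.cos θ) * Real.sign (Real.sin θ)
          + w (x₀ + r * Real.cos θ) * (Real.sin θ ^ 2 + 1 / 2)))
      = (vL + vR) / 2 := by
  have hπ := Real.pi_pos
  set g : ℝ → ℝ := fun θ => if Real.cos θ < 0 then vL else vR with hg
  have hwg : ∀ θ : ℝ, w (x₀ + r * Real.cos θ) = g θ := by
    intro θ; rw [hw]; simp only [hg]
    refine if_congr ?_ rfl rfl
    constructor <;> intro h <;> nlinarith
  have hgm : Measurable g :=
    Measurable.ite (measurableSet_lt Real.measurable_cos measurable_const)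
      measurable_const measurable_const
  have hgb : ∀ θ, |g θ| ≤ |vL| + |vR| := by
    intro θ; simp only [hg]
    split
    · exact le_add_of_nonneg_right (abs_nonneg _)
    · exact le_add_of_nonneg_left (abs_nonneg _)
  have hrefl_cos : ∀ θ : ℝ, Real.cos (2 * π - θ) = Real.cos θ := by
    intro θ; rw [Real.cos_sub]; simp
  have hrefl_sin : ∀ θ : ℝ, Real.sin (2 * π - θ) = -Real.sin θ := by
    intro θ; rw [Real.sin_sub]; simp
  constructor
  · -- part (i)
    have I1 : IntervalIntegrable (fun θ => -(K₀ / cT) * Real.sign (Real.cos θ)) volume 0 (2 * π) := by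
      refine II_of_bound (measurable_const.mul (measurable_rsign.comp Real.measurable_cos))
        (|K₀ / cT|) (fun x => ?_) 0 (2 * π)
      simp only [Pi.mul_apply, Pi.add_apply, Function.comp_apply]
      rw [abs_mul, abs_neg]
      exact mul_le_of_le_one_right (abs_nonneg _) (abs_rsign_le _)
    have I2 : IntervalIntegrable (fun θ => g θ * Real.sin θ * Real.cos θ) volume 0 (2 * π) := by
      refine II_of_bound ((hgm.mul Real.measurable_sin).mul Real.measurable_cos)
        (|vL| + |vR|) (fun x => ?_) 0 (2 * π)
      simp only [Pi.mul_apply, Pi.add_apply, Function.comp_apply]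
      rw [abs_mul, abs_mul]
      calc |g x| * |Real.sin x| * |Real.cos x|
          ≤ |g x| * |Real.sin x| :=
            mul_le_of_le_one_right (mul_nonneg (abs_nonneg _) (abs_nonneg _))
              (Real.abs_cos_le_one x)
        _ ≤ |g x| := mul_le_of_le_one_right (abs_nonneg _) (Real.abs_sin_le_one x)
        _ ≤ |vL| + |vR| := hgb x
    have e : (∫ θ in (0 : ℝ)..(2 * π),
        (-(K₀ / cT) * Real.sign (Real.cos θ)
          + w (x₀ + r * Real.cos θ) * Real.sin θ * Real.cos θ))
        = (∫ θ in (0 : ℝ)..(2 * π), -(K₀ / cT) * Real.sign (Real.cos θ))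
          + ∫ θ in (0 : ℝ)..(2 * π), g θ * Real.sin θ * Real.cos θ := by
      rw [← intervalIntegral.integral_add I1 I2]
      exact intervalIntegral.integral_congr fun x _ => by rw [hwg]
    have e1 : (∫ θ in (0 : ℝ)..(2 * π), -(K₀ / cT) * Real.sign (Real.cos θ)) = 0 := by
      rw [intervalIntegral.integral_const_mul, int_sign_cos, mul_zero]
    have e2 : (∫ θ in (0 : ℝ)..(2 * π), g θ * Real.sin θ * Real.cos θ) = 0 := by
      refine reflect_zero _ fun θ => ?_
      simp only [hg, hrefl_cos θ, hrefl_sin θ]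
      ring
    rw [e, e1, e2]
    simp
  · -- part (ii)
    obtain ⟨C, hC⟩ := (isCompact_Icc (a := x₀ - r) (b := x₀ + r)).exists_bound_of_continuousOn
      hℓ.continuousOn
    have hmem : ∀ θ : ℝ, x₀ + r * Real.cos θ ∈ Set.Icc (x₀ - r) (x₀ + r) := by
      intro θ
      constructor <;> nlinarith [Real.neg_one_le_cos θ, Real.cos_le_one θ]
    have I1 : IntervalIntegrable
        (fun θ => -(1 / cT) * ℓ (x₀ + r * Real.cos θ) * Real.sign (Real.sin θ))
        volume 0 (2 * π) := by
      refine II_of_bound ((measurable_const.mul (hℓ.measurable.comp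
        (measurable_const.add (measurable_const.mul Real.measurable_cos)))).mul
        (measurable_rsign.comp Real.measurable_sin)) (|1 / cT| * C) (fun x => ?_) 0 (2 * π)
      simp only [Pi.mul_apply, Pi.add_apply, Function.comp_apply]
      rw [abs_mul, abs_mul, abs_neg]
      have h1 : |ℓ (x₀ + r * Real.cos x)| ≤ C := by simpa using hC _ (hmem x)
      calc |1 / cT| * |ℓ (x₀ + r * Real.cos x)| * |Real.sign (Real.sin x)|
          ≤ |1 / cT| * |ℓ (x₀ + r * Real.cos x)| :=
            mul_le_of_le_one_right (mul_nonneg (abs_nonneg _) (abs_nonneg _))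
              (abs_rsign_le _)
        _ ≤ |1 / cT| * C := mul_le_mul_of_nonneg_left h1 (abs_nonneg _)
    have I2 : ∀ a b : ℝ, IntervalIntegrable
        (fun θ => g θ * (Real.sin θ ^ 2 + 1 / 2)) volume a b := by
      intro a b
      refine II_of_bound (hgm.mul ((Real.measurable_sin.pow_const 2).add measurable_const))
        ((|vL| + |vR|) * (3 / 2)) (fun x => ?_) a b
      simp only [Pi.mul_apply, Pi.add_apply, Function.comp_apply]
      rw [abs_mul]
      have h3 : |Real.sin x ^ 2 + 1 / 2| ≤ 3 / 2 := by
        rw [abs_le]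
        constructor <;> nlinarith [Real.sin_sq_le_one x, sq_nonneg (Real.sin x)]
      nlinarith [hgb x, abs_nonneg (g x), abs_nonneg (Real.sin x ^ 2 + 1 / 2)]
    have e : (∫ θ in (0 : ℝ)..(2 * π),
        (-(1 / cT) * ℓ (x₀ + r * Real.cos θ) * Real.sign (Real.sin θ)
          + w (x₀ + r * Real.cos θ) * (Real.sin θ ^ 2 + 1 / 2)))
        = (∫ θ in (0 : ℝ)..(2 * π),
            -(1 / cT) * ℓ (x₀ + r * Real.cos θ) * Real.sign (Real.sin θ))
          + ∫ θ in (0 : ℝ)..(2 * π), g θ * (Real.sin θ ^ 2 + 1 / 2) := by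
      rw [← intervalIntegral.integral_add I1 (I2 0 (2 * π))]
      exact intervalIntegral.integral_congr fun x _ => by rw [hwg]
    have e1 : (∫ θ in (0 : ℝ)..(2 * π),
        -(1 / cT) * ℓ (x₀ + r * Real.cos θ) * Real.sign (Real.sin θ)) = 0 := by
      refine reflect_zero _ fun θ => ?_
      rw [hrefl_cos θ, hrefl_sin θ, Real.sign_neg]
      ring
    -- the main piecewise computation
    have key : ∀ a b : ℝ, (∫ x in a..b, (Real.sin x ^ 2 + 1 / 2))
        = (Real.sin a * Real.cos a - Real.sin b * Real.cos b + b - a) / 2 + (b - a) * (1 / 2) := by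
      intro a b
      rw [intervalIntegral.integral_add (f := fun x => Real.sin x ^ 2) (g := fun _ => (1 / 2 : ℝ))
          ((Real.continuous_sin.pow 2).intervalIntegrable a b)
        (intervalIntegrable_const), integral_sin_sq, intervalIntegral.integral_const]
      simp [smul_eq_mul]
    have hsplit := intervalIntegral.integral_add_adjacent_intervals (I2 0 (π / 2))
      (I2 (π / 2) (3 * π / 2))
    have hsplit2 := intervalIntegral.integral_add_adjacent_intervals
      ((I2 0 (π / 2)).trans (I2 (π / 2) (3 * π / 2))) (I2 (3 * π / 2) (2 * π))
    have p1 : (∫ θ in (0 : ℝ)..(π / 2), g θ * (Real.sin θ ^ 2 + 1 / 2)) = vR * (π / 2) := by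
      have : (∫ θ in (0 : ℝ)..(π / 2), g θ * (Real.sin θ ^ 2 + 1 / 2))
          = ∫ θ in (0 : ℝ)..(π / 2), vR * (Real.sin θ ^ 2 + 1 / 2) := by
        refine intervalIntegral.integral_congr fun x hx => ?_
        rw [Set.uIcc_of_le (by linarith)] at hx
        have hcos : 0 ≤ Real.cos x := Real.cos_nonneg_of_mem_Icc ⟨by linarith [hx.1], hx.2⟩
        simp only [hg, if_neg (not_lt.2 hcos)]
      rw [this, intervalIntegral.integral_const_mul, key,
        Real.sin_zero, Real.cos_zero, Real.sin_pi_div_two, Real.cos_pi_div_two]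
      ring
    have p2 : (∫ θ in (π / 2 : ℝ)..(3 * π / 2), g θ * (Real.sin θ ^ 2 + 1 / 2)) = vL * π := by
      have hae : ∀ᵐ x : ℝ, x ≠ 3 * π / 2 := by
        have h0 : volume ({3 * π / 2} : Set ℝ) = 0 := Real.volume_singleton
        rw [MeasureTheory.ae_iff]
        simpa [not_not, Set.setOf_eq_eq_singleton'] using h0
      have : (∫ θ in (π / 2 : ℝ)..(3 * π / 2), g θ * (Real.sin θ ^ 2 + 1 / 2))
          = ∫ θ in (π / 2 : ℝ)..(3 * π / 2), vL * (Real.sin θ ^ 2 + 1 / 2) := by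
        refine intervalIntegral.integral_congr_ae ?_
        filter_upwards [hae] with x hx hmem'
        rw [Set.uIoc_of_le (by linarith)] at hmem'
        have hx2 : x < 3 * π / 2 := lt_of_le_of_ne hmem'.2 hx
        have hcos : Real.cos x < 0 :=
          Real.cos_neg_of_pi_div_two_lt_of_lt hmem'.1 (by linarith)
        simp only [hg, if_pos hcos]
      rw [this, intervalIntegral.integral_const_mul, key]
      have h32 : (3 : ℝ) * π / 2 = π + π / 2 := by ring
      rw [h32, Real.sin_add, Real.cos_add, Real.sin_pi, Real.cos_pi,
        Real.sin_pi_div_two, Real.cos_pi_div_two]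
      ring
    have p3 : (∫ θ in (3 * π / 2 : ℝ)..(2 * π), g θ * (Real.sin θ ^ 2 + 1 / 2)) = vR * (π / 2) := by
      have : (∫ θ in (3 * π / 2 : ℝ)..(2 * π), g θ * (Real.sin θ ^ 2 + 1 / 2))
          = ∫ θ in (3 * π / 2 : ℝ)..(2 * π), vR * (Real.sin θ ^ 2 + 1 / 2) := by
        refine intervalIntegral.integral_congr fun x hx => ?_
        rw [Set.uIcc_of_le (by linarith)] at hx
        have hcos : 0 ≤ Real.cos x := by
          rw [← Real.cos_sub_two_pi]
          exact Real.cos_nonneg_of_mem_Icc ⟨by linarith [hx.1], by linarith [hx.2]⟩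
        simp only [hg, if_neg (not_lt.2 hcos)]
      rw [this, intervalIntegral.integral_const_mul, key]
      have h32 : (3 : ℝ) * π / 2 = π + π / 2 := by ring
      rw [h32, Real.sin_add, Real.cos_add, Real.sin_pi, Real.cos_pi,
        Real.sin_pi_div_two, Real.cos_pi_div_two, Real.sin_two_pi, Real.cos_two_pi]
      ring
    have e2 : (∫ θ in (0 : ℝ)..(2 * π), g θ * (Real.sin θ ^ 2 + 1 / 2)) = π * (vL + vR) := by
      rw [← hsplit2, ← hsplit, p1, p2, p3]; ring
    rw [e, e1, e2]
    field_simp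
    ring
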